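/- Let n ≥ 2, q ∈ [0,1], and let P_q be the top-or-bottom-to-random transition matrix on S_n. Define f : S_n → ℝ by f(σ) = Σ_{i ∈ Des(σ)} C(n−2, i−1)·q^{i−1}·(1−q)^{n−1−i}. Then the function σ ↦ f(σ) − 1/2 is a right eigenfunction of P_q with eigenvalue (n−2)/n: for every σ ∈ S_n, Σ_{τ ∈ S_n} P_q(σ,τ)·(f(τ) − 1/2) = ((n−2)/n)·(f(σ) − 1/2). -/
import Mathlib


open Finset

/-- 0-indexed descent set of a deck arrangement: `i ∈ desSet n σ` iff the card at
position `i` is greater than the card at position `i+1` (positions `0, …, n-2`). -/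
def desSet (n : ℕ) (σ : Equiv.Perm (Fin n)) : Finset ℕ :=
  (Finset.range (n - 1)).filter
    (fun i => ∃ h : i + 1 < n, σ ⟨i + 1, h⟩ < σ ⟨i, Nat.lt_of_succ_lt h⟩)

/-- `des σ` is the number of descents of `σ`. -/
def des (n : ℕ) (σ : Equiv.Perm (Fin n)) : ℕ := (desSet n σ).card

/-- the cycle `e_i` (0-indexed): sends `j ↦ j-1` for `j > i`, `i ↦ n-1`, fixes `j < i`.
(`Fin.cycleRange i` is the cycle `c_i` (0-indexed): sends `j ↦ j+1` for `j < i`,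
`i ↦ 0`, fixes `j > i`.) -/
def botCycle (n : ℕ) (i : Fin n) : Equiv.Perm (Fin n) :=
  Fin.revPerm * Fin.cycleRange i.rev * Fin.revPerm

/-- top-or-bottom-to-random transition matrix with parameter `q`:
with probability `q` remove the top card and reinsert it at a uniform position,
otherwise do the same with the bottom card. -/
noncomputable def Pq (n : ℕ) (q : ℝ) : Matrix (Equiv.Perm (Fin n)) (Equiv.Perm (Fin n)) ℝ :=
  fun σ τ =>
    q / n * ((Finset.univ.filter (fun i : Fin n => τ = σ * Fin.cycleRange i)).card : ℝ) +
    (1 - q) / n * ((Finset.univ.filter (fun i : Fin n => τ = σ * botCycle n i)).card : ℝ)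

/-- weighted descent statistic `f(σ) = Σ_{j ∈ Des(σ)} C(n-2,j) q^j (1-q)^{n-2-j}`
(0-indexed version of `Σ_{i ∈ Des(σ)} C(n-2,i-1) q^{i-1} (1-q)^{n-1-i}`). -/
noncomputable def fdes (n : ℕ) (q : ℝ) (σ : Equiv.Perm (Fin n)) : ℝ :=
  ∑ j ∈ desSet n σ, ((n - 2).choose j : ℝ) * q ^ j * (1 - q) ^ (n - 2 - j)

noncomputable def Bf (m : ℕ) (q : ℝ) (j : ℕ) : ℝ :=
  (m.choose j : ℝ) * q ^ j * (1 - q) ^ (m - j)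

noncomputable def Dd (n : ℕ) (σ : Equiv.Perm (Fin n)) (j : ℕ) : ℝ :=
  if j ∈ desSet n σ then 1 else 0

lemma mem_desSet_iff {n : ℕ} (σ : Equiv.Perm (Fin n)) {j : ℕ} (hj : j + 1 < n) :
    j ∈ desSet n σ ↔ σ ⟨j + 1, hj⟩ < σ ⟨j, Nat.lt_of_succ_lt hj⟩ := by
  unfold desSet
  rw [Finset.mem_filter, Finset.mem_range]
  constructor
  · rintro ⟨-, h, hlt⟩; exact hlt
  · intro h; exact ⟨by omega, hj, h⟩

lemma botCycle_apply {n : ℕ} (i j : Fin n) :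
    botCycle n i j = (Fin.cycleRange i.rev j.rev).rev := by
  simp [botCycle, Equiv.Perm.mul_apply]

lemma botCycle_of_lt {n : ℕ} {i j : Fin n} (h : j < i) : botCycle n i j = j := by
  cases n with
  | zero => exact absurd i.isLt (by omega)
  | succ n =>
    rw [botCycle_apply, Fin.cycleRange_of_gt (by rwa [Fin.rev_lt_rev]), Fin.rev_rev]

lemma botCycle_self {n : ℕ} (i : Fin n) :
    botCycle n i i = ⟨n - 1, by have := i.isLt; omega⟩ := by
  cases n with
  | zero => exact absurd i.isLt (by omega)
  | succ n =>
    rw [botCycle_apply, Fin.cycleRange_self]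
    ext
    simp [Fin.val_rev]

lemma botCycle_of_gt {n : ℕ} {i j : Fin n} (h : i < j) :
    botCycle n i j = ⟨(j : ℕ) - 1, by have := j.isLt; omega⟩ := by
  cases n with
  | zero => exact absurd i.isLt (by omega)
  | succ n =>
    rw [botCycle_apply, Fin.cycleRange_of_lt (by rwa [Fin.rev_lt_rev])]
    have hj : 0 < (j : ℕ) := by
      have : (i : ℕ) < (j : ℕ) := h
      omega
    have hjv : (j : ℕ) ≤ n := by have := j.isLt; omega
    have h1 : ((j.rev + 1 : Fin (n+1)) : ℕ) = n - (j : ℕ) + 1 := by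
      rw [Fin.val_add_one_of_lt]
      · simp [Fin.val_rev]
      · rw [Fin.lt_iff_val_lt_val]
        simp only [Fin.val_rev, Fin.val_last]
        omega
    ext
    rw [Fin.val_rev, h1]
    simp
    omega

lemma cr_lt {m : ℕ} {k j : ℕ} (hk : k < m+2) (hjk : j < k) (hj1 : j+1 < m+2) :
    Fin.cycleRange (⟨k, hk⟩ : Fin (m+2)) ⟨j, by omega⟩ = ⟨j+1, hj1⟩ := by
  rw [Fin.cycleRange_of_lt (Fin.mk_lt_mk.mpr hjk)]
  ext
  rw [Fin.val_add_one_of_lt (by rw [Fin.lt_iff_val_lt_val]; simp only [Fin.val_last]; omega)]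

lemma cr_gt {m : ℕ} {k j : ℕ} (hk : k < m+2) (hjk : k < j) (hj : j < m+2) :
    Fin.cycleRange (⟨k, hk⟩ : Fin (m+2)) ⟨j, hj⟩ = ⟨j, hj⟩ :=
  Fin.cycleRange_of_gt (Fin.mk_lt_mk.mpr hjk)

lemma top_sum {m : ℕ} (σ : Equiv.Perm (Fin (m+2))) {j : ℕ} (hj : j < m + 1) :
    ∑ i : Fin (m+2), Dd (m+2) (σ * Fin.cycleRange i) j
      = (↑(m - j)) * Dd (m+2) σ (j+1) + (↑j) * Dd (m+2) σ j + 1 := by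
  have hj2 : j + 1 < m + 2 := by omega
  set F : ℕ → ℝ := fun k =>
    if h : k < m+2 then Dd (m+2) (σ * Fin.cycleRange ⟨k, h⟩) j else 0 with hF
  have h0 : ∑ i : Fin (m+2), Dd (m+2) (σ * Fin.cycleRange i) j
      = ∑ k ∈ range (m+2), F k := by
    rw [← Fin.sum_univ_eq_sum_range]
    exact Finset.sum_congr rfl fun i _ => by simp [hF, i.isLt]
  have hsplit : ∑ k ∈ Finset.Ico 0 (j+2), F k + ∑ k ∈ Finset.Ico (j+2) (m+2), F k
      = ∑ k ∈ Finset.Ico 0 (m+2), F k :=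
    Finset.sum_Ico_consecutive _ (by omega) (by omega)
  have hP3 : ∑ k ∈ Finset.Ico (j+2) (m+2), F k = (↑(m - j)) * Dd (m+2) σ (j+1) := by
    have hc : ∀ k ∈ Finset.Ico (j+2) (m+2), F k = Dd (m+2) σ (j+1) := by
      intro k hk
      rw [Finset.mem_Ico] at hk
      obtain ⟨hk1, hk2⟩ := hk
      have hj3 : j + 2 < m + 2 := by omega
      rw [hF]
      simp only [dif_pos hk2]
      unfold Dd
      refine if_congr ?_ rfl rfl
      rw [mem_desSet_iff _ hj2, mem_desSet_iff _ hj3]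
      simp only [Equiv.Perm.mul_apply]
      rw [cr_lt hk2 (by omega) hj3, cr_lt hk2 (by omega) hj2]
    rw [Finset.sum_congr rfl hc, Finset.sum_const, Nat.card_Ico, nsmul_eq_mul]
    congr 2
    omega
  have hP1 : ∑ k ∈ range j, F k = (↑j) * Dd (m+2) σ j := by
    have hc : ∀ k ∈ range j, F k = Dd (m+2) σ j := by
      intro k hk
      rw [Finset.mem_range] at hk
      have hk2 : k < m + 2 := by omega
      rw [hF]
      simp only [dif_pos hk2]
      unfold Dd
      refine if_congr ?_ rfl rfl
      rw [mem_desSet_iff _ hj2, mem_desSet_iff _ hj2]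
      simp only [Equiv.Perm.mul_apply]
      rw [cr_gt hk2 (by omega) hj2, cr_gt hk2 (by omega) (by omega : j < m+2)]
    rw [Finset.sum_congr rfl hc, Finset.sum_const, Finset.card_range, nsmul_eq_mul]
  have hP2 : F j + F (j+1) = 1 := by
    have hne : σ ⟨j+1, hj2⟩ ≠ σ (⟨0, by omega⟩ : Fin (m+2)) := by
      intro h
      have := σ.injective h
      simp [Fin.ext_iff] at this
    have e1 : F j = if σ ⟨j+1, hj2⟩ < σ ⟨0, by omega⟩ then (1:ℝ) else 0 := by
      rw [hF]
      simp only [dif_pos (show j < m+2 by omega)]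
      unfold Dd
      refine if_congr ?_ rfl rfl
      rw [mem_desSet_iff _ hj2]
      simp only [Equiv.Perm.mul_apply]
      rw [cr_gt (by omega) (by omega) hj2]
      have : Fin.cycleRange (⟨j, by omega⟩ : Fin (m+2)) ⟨j, by omega⟩ = ⟨0, by omega⟩ := by
        rw [Fin.cycleRange_self]
        ext; simp
      rw [this]
    have e2 : F (j+1) = if σ ⟨0, by omega⟩ < σ ⟨j+1, hj2⟩ then (1:ℝ) else 0 := by
      rw [hF]
      simp only [dif_pos hj2]
      unfold Dd
      refine if_congr ?_ rfl rfl
      rw [mem_desSet_iff _ hj2]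
      simp only [Equiv.Perm.mul_apply]
      rw [cr_lt hj2 (by omega) hj2]
      have : Fin.cycleRange (⟨j+1, hj2⟩ : Fin (m+2)) ⟨j+1, hj2⟩ = ⟨0, by omega⟩ := by
        rw [Fin.cycleRange_self]
        ext; simp
      rw [this]
    rw [e1, e2]
    rcases lt_or_gt_of_ne hne with h | h
    · rw [if_pos h, if_neg (asymm h)]; ring
    · rw [if_neg (asymm h), if_pos h]; ring
  calc ∑ i : Fin (m+2), Dd (m+2) (σ * Fin.cycleRange i) j
      = ∑ k ∈ range (m+2), F k := h0
    _ = ∑ k ∈ Finset.Ico 0 (j+2), F k + ∑ k ∈ Finset.Ico (j+2) (m+2), F k := by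
        rw [hsplit, ← Finset.range_eq_Ico]
    _ = (∑ k ∈ range j, F k + F j + F (j+1)) + ∑ k ∈ Finset.Ico (j+2) (m+2), F k := by
        rw [← Finset.range_eq_Ico]
        rw [Finset.sum_range_succ, Finset.sum_range_succ]
    _ = (↑(m - j)) * Dd (m+2) σ (j+1) + (↑j) * Dd (m+2) σ j + 1 := by
        rw [hP1, hP3]
        linear_combination hP2

lemma bot_sum {m : ℕ} (σ : Equiv.Perm (Fin (m+2))) {j : ℕ} (hj : j < m + 1) :
    ∑ i : Fin (m+2), Dd (m+2) (σ * botCycle (m+2) i) j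
      = (↑(m - j)) * Dd (m+2) σ j + (↑j) * Dd (m+2) σ (j-1) + 1 := by
  have hj2 : j + 1 < m + 2 := by omega
  set F : ℕ → ℝ := fun k =>
    if h : k < m+2 then Dd (m+2) (σ * botCycle (m+2) ⟨k, h⟩) j else 0 with hF
  have h0 : ∑ i : Fin (m+2), Dd (m+2) (σ * botCycle (m+2) i) j
      = ∑ k ∈ range (m+2), F k := by
    rw [← Fin.sum_univ_eq_sum_range]
    exact Finset.sum_congr rfl fun i _ => by simp [hF, i.isLt]
  have hsplit : ∑ k ∈ Finset.Ico 0 (j+2), F k + ∑ k ∈ Finset.Ico (j+2) (m+2), F k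
      = ∑ k ∈ Finset.Ico 0 (m+2), F k :=
    Finset.sum_Ico_consecutive _ (by omega) (by omega)
  have hP3 : ∑ k ∈ Finset.Ico (j+2) (m+2), F k = (↑(m - j)) * Dd (m+2) σ j := by
    have hc : ∀ k ∈ Finset.Ico (j+2) (m+2), F k = Dd (m+2) σ j := by
      intro k hk
      rw [Finset.mem_Ico] at hk
      obtain ⟨hk1, hk2⟩ := hk
      rw [hF]
      simp only [dif_pos hk2]
      unfold Dd
      refine if_congr ?_ rfl rfl
      rw [mem_desSet_iff _ hj2, mem_desSet_iff _ hj2]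
      simp only [Equiv.Perm.mul_apply]
      rw [botCycle_of_lt (show (⟨j+1, hj2⟩ : Fin (m+2)) < ⟨k, hk2⟩ from Fin.mk_lt_mk.mpr (by omega)),
        botCycle_of_lt (show (⟨j, by omega⟩ : Fin (m+2)) < ⟨k, hk2⟩ from Fin.mk_lt_mk.mpr (by omega))]
    rw [Finset.sum_congr rfl hc, Finset.sum_const, Nat.card_Ico, nsmul_eq_mul]
    congr 2
    omega
  have hP1 : ∑ k ∈ range j, F k = (↑j) * Dd (m+2) σ (j-1) := by
    have hc : ∀ k ∈ range j, F k = Dd (m+2) σ (j-1) := by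
      intro k hk
      rw [Finset.mem_range] at hk
      have hk2 : k < m + 2 := by omega
      have hj1 : 1 ≤ j := by omega
      have hjm : (j-1) + 1 < m + 2 := by omega
      rw [hF]
      simp only [dif_pos hk2]
      unfold Dd
      refine if_congr ?_ rfl rfl
      rw [mem_desSet_iff _ hj2, mem_desSet_iff _ hjm]
      simp only [Equiv.Perm.mul_apply]
      rw [botCycle_of_gt (show (⟨k, hk2⟩ : Fin (m+2)) < ⟨j+1, hj2⟩ from Fin.mk_lt_mk.mpr (by omega)),
        botCycle_of_gt (show (⟨k, hk2⟩ : Fin (m+2)) < ⟨j, by omega⟩ from Fin.mk_lt_mk.mpr (by omega))]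
      have e1 : (⟨j+1-1, by omega⟩ : Fin (m+2)) = ⟨(j-1)+1, hjm⟩ := by ext; simp; omega
      have e2 : (⟨j-1, by omega⟩ : Fin (m+2)) = ⟨j-1, by omega⟩ := rfl
      rw [e1]
    rw [Finset.sum_congr rfl hc, Finset.sum_const, Finset.card_range, nsmul_eq_mul]
  have hP2 : F j + F (j+1) = 1 := by
    have hne : σ ⟨j, by omega⟩ ≠ σ (⟨m+1, by omega⟩ : Fin (m+2)) := by
      intro h
      have := σ.injective h
      simp [Fin.ext_iff] at this
      omega
    have e1 : F j = if σ ⟨j, by omega⟩ < σ ⟨m+1, by omega⟩ then (1:ℝ) else 0 := by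
      rw [hF]
      simp only [dif_pos (show j < m+2 by omega)]
      unfold Dd
      refine if_congr ?_ rfl rfl
      rw [mem_desSet_iff _ hj2]
      simp only [Equiv.Perm.mul_apply]
      rw [botCycle_of_gt (show (⟨j, by omega⟩ : Fin (m+2)) < ⟨j+1, hj2⟩ from Fin.mk_lt_mk.mpr (by omega))]
      have e : botCycle (m+2) ⟨j, by omega⟩ ⟨j, by omega⟩ = ⟨m+1, by omega⟩ := by
        rw [botCycle_self]; ext; simp
      rw [e]
      have e' : (⟨j+1-1, by omega⟩ : Fin (m+2)) = ⟨j, by omega⟩ := by ext; simp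
      rw [e']
    have e2 : F (j+1) = if σ ⟨m+1, by omega⟩ < σ ⟨j, by omega⟩ then (1:ℝ) else 0 := by
      rw [hF]
      simp only [dif_pos hj2]
      unfold Dd
      refine if_congr ?_ rfl rfl
      rw [mem_desSet_iff _ hj2]
      simp only [Equiv.Perm.mul_apply]
      rw [botCycle_of_lt (show (⟨j, by omega⟩ : Fin (m+2)) < ⟨j+1, hj2⟩ from Fin.mk_lt_mk.mpr (by omega))]
      have e : botCycle (m+2) ⟨j+1, hj2⟩ ⟨j+1, hj2⟩ = ⟨m+1, by omega⟩ := by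
        rw [botCycle_self]; ext; simp
      rw [e]
    rw [e1, e2]
    rcases lt_or_gt_of_ne hne with h | h
    · rw [if_pos h, if_neg (asymm h)]; ring
    · rw [if_neg (asymm h), if_pos h]; ring
  calc ∑ i : Fin (m+2), Dd (m+2) (σ * botCycle (m+2) i) j
      = ∑ k ∈ range (m+2), F k := h0
    _ = ∑ k ∈ Finset.Ico 0 (j+2), F k + ∑ k ∈ Finset.Ico (j+2) (m+2), F k := by
        rw [hsplit, ← Finset.range_eq_Ico]
    _ = (∑ k ∈ range j, F k + F j + F (j+1)) + ∑ k ∈ Finset.Ico (j+2) (m+2), F k := by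
        rw [← Finset.range_eq_Ico]
        rw [Finset.sum_range_succ, Finset.sum_range_succ]
    _ = (↑(m - j)) * Dd (m+2) σ j + (↑j) * Dd (m+2) σ (j-1) + 1 := by
        rw [hP1, hP3]
        linear_combination hP2

lemma sumBf (m : ℕ) (q : ℝ) : ∑ j ∈ range (m+1), Bf m q j = 1 := by
  have h : ∑ j ∈ range (m+1), Bf m q j = (q + (1-q))^m := by
    rw [add_pow]
    refine Finset.sum_congr rfl fun j _ => ?_
    unfold Bf
    ring
  rw [h]
  norm_num

lemma Bf_top (m : ℕ) (q : ℝ) : Bf m q (m+1) = 0 := by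
  unfold Bf
  rw [Nat.choose_eq_zero_of_lt (by omega)]
  norm_num

lemma step1 (m : ℕ) (q : ℝ) (k : ℕ) :
    q * (↑(m - k)) * Bf m q k = (↑(k+1)) * (1 - q) * Bf m q (k+1) := by
  rcases lt_or_ge k m with hk | hk
  · have hc : ((m.choose (k+1) : ℝ)) * (↑(k+1)) = (m.choose k : ℝ) * (↑(m - k)) := by
      exact_mod_cast congrArg (Nat.cast (R := ℝ)) (Nat.choose_succ_right_eq m k)
    have hpow : (1-q)^(m-k) = (1-q)^(m-(k+1)) * (1-q) := by
      rw [← pow_succ]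
      congr 1
      omega
    unfold Bf
    rw [hpow, pow_succ]
    linear_combination (-(q^k * q * (1-q)^(m-(k+1)) * (1-q))) * hc
  · have h1 : m - k = 0 := by omega
    have h2 : (m.choose (k+1) : ℝ) = 0 := by
      rw [Nat.choose_eq_zero_of_lt (by omega)]
      norm_num
    unfold Bf
    rw [h1, h2]
    norm_num

lemma keyid (m : ℕ) (q : ℝ) {j : ℕ} (hj : j < m + 1) :
    (if j = 0 then 0 else q * (↑(m+1-j)) * Bf m q (j-1)) + q * (↑j) * Bf m q j
      + (1-q) * (↑(m-j)) * Bf m q j + (1-q) * (↑(j+1)) * Bf m q (j+1)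
      = (↑m) * Bf m q j := by
  rcases Nat.eq_zero_or_pos j with rfl | hjp
  · simp only [if_pos rfl, Nat.cast_zero, Nat.sub_zero]
    have h := step1 m q 0
    simp only [Nat.sub_zero, Nat.cast_one, zero_add, pow_zero] at h
    push_cast at h ⊢
    linarith [h]
  · obtain ⟨k, rfl⟩ : ∃ k, j = k + 1 := ⟨j - 1, by omega⟩
    rw [if_neg (by omega)]
    have hk : k < m := by omega
    have e1 : ((m + 1 - (k+1) : ℕ) : ℝ) = (m : ℝ) - k := by
      rw [show m + 1 - (k+1) = m - k from by omega, Nat.cast_sub (by omega)]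
    have e2 : ((m - (k+1) : ℕ) : ℝ) = (m : ℝ) - k - 1 := by
      rw [Nat.cast_sub (by omega)]
      push_cast
      ring
    have h1 := step1 m q k
    have h2 := step1 m q (k+1)
    rw [show ((m - k : ℕ) : ℝ) = (m:ℝ) - k from by rw [Nat.cast_sub (by omega)]] at h1
    rw [e2] at h2
    rw [e1, e2]
    simp only [Nat.add_sub_cancel]
    push_cast at h1 h2 ⊢
    linear_combination h1 - h2

lemma reindexA (m : ℕ) (q : ℝ) (D : ℕ → ℝ) :
    ∑ j ∈ range (m+1), q * (↑(m-j)) * D (j+1) * Bf m q j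
      = ∑ j ∈ range (m+1), (if j = 0 then 0 else q * (↑(m+1-j)) * Bf m q (j-1)) * D j := by
  have e1 : ∀ j : ℕ, (if j + 1 = 0 then (0:ℝ) else q * (↑(m+1-(j+1))) * Bf m q ((j+1)-1)) * D (j+1)
      = q * (↑(m-j)) * D (j+1) * Bf m q j := by
    intro j
    rw [if_neg (Nat.succ_ne_zero j), show m+1-(j+1) = m-j from by omega,
      show (j+1)-1 = j from rfl]
    ring
  calc ∑ j ∈ range (m+1), q * (↑(m-j)) * D (j+1) * Bf m q j
      = ∑ j ∈ range m, q * (↑(m-j)) * D (j+1) * Bf m q j := by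
        rw [Finset.sum_range_succ, Nat.sub_self]
        norm_num
    _ = ∑ j ∈ range (m+1), (if j = 0 then 0 else q * (↑(m+1-j)) * Bf m q (j-1)) * D j := by
        rw [Finset.sum_range_succ'
          (fun j => (if j = 0 then 0 else q * (↑(m+1-j)) * Bf m q (j-1)) * D j) m]
        rw [if_pos rfl, zero_mul, add_zero]
        exact (Finset.sum_congr rfl fun j _ => (e1 j)).symm

lemma reindexE (m : ℕ) (q : ℝ) (D : ℕ → ℝ) :
    ∑ j ∈ range (m+1), (1-q) * (↑j) * D (j-1) * Bf m q j
      = ∑ j ∈ range (m+1), (1-q) * (↑(j+1)) * Bf m q (j+1) * D j := by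
  rw [Finset.sum_range_succ' (fun j => (1-q) * (↑j) * D (j-1) * Bf m q j) m]
  rw [Finset.sum_range_succ (fun j => (1-q) * (↑(j+1)) * Bf m q (j+1) * D j) m]
  rw [Bf_top]
  simp only [Nat.cast_zero, mul_zero, zero_mul, add_zero]
  refine Finset.sum_congr rfl fun j _ => ?_
  rw [show (j+1)-1 = j from rfl]
  push_cast
  ring

lemma middle_claim (m : ℕ) (q : ℝ) (D : ℕ → ℝ) :
    ∑ j ∈ range (m+1),
        (q * ((↑(m-j)) * D (j+1) + (↑j) * D j)
          + (1-q) * ((↑(m-j)) * D j + (↑j) * D (j-1))) * Bf m q j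
      = (↑m) * ∑ j ∈ range (m+1), D j * Bf m q j := by
  have expand : ∀ j ∈ range (m+1),
      (q * ((↑(m-j)) * D (j+1) + (↑j) * D j)
        + (1-q) * ((↑(m-j)) * D j + (↑j) * D (j-1))) * Bf m q j
      = q * (↑(m-j)) * D (j+1) * Bf m q j
        + (q * (↑j) * Bf m q j + (1-q) * (↑(m-j)) * Bf m q j) * D j
        + (1-q) * (↑j) * D (j-1) * Bf m q j := fun j _ => by ring
  rw [Finset.sum_congr rfl expand]
  rw [Finset.sum_add_distrib, Finset.sum_add_distrib, reindexA, reindexE]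
  rw [← Finset.sum_add_distrib, ← Finset.sum_add_distrib, Finset.mul_sum]
  refine Finset.sum_congr rfl fun j hj => ?_
  rw [Finset.mem_range] at hj
  have h := keyid m q hj
  calc (if j = 0 then 0 else q * (↑(m+1-j)) * Bf m q (j-1)) * D j
        + (q * (↑j) * Bf m q j + (1-q) * (↑(m-j)) * Bf m q j) * D j
        + (1-q) * (↑(j+1)) * Bf m q (j+1) * D j
      = ((if j = 0 then 0 else q * (↑(m+1-j)) * Bf m q (j-1)) + q * (↑j) * Bf m q j
          + (1-q) * (↑(m-j)) * Bf m q j + (1-q) * (↑(j+1)) * Bf m q (j+1)) * D j := by ring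
    _ = (↑m) * Bf m q j * D j := by rw [h]
    _ = (↑m) * (D j * Bf m q j) := by ring

lemma fdes_eq (n : ℕ) (q : ℝ) (σ : Equiv.Perm (Fin n)) :
    fdes n q σ = ∑ j ∈ range (n-1), Dd n σ j * Bf (n-2) q j := by
  calc fdes n q σ = ∑ j ∈ desSet n σ, Bf (n-2) q j := rfl
    _ = ∑ j ∈ (range (n-1)).filter (fun j => j ∈ desSet n σ), Bf (n-2) q j := by
        congr 1
        ext j
        simp only [Finset.mem_filter, desSet, Finset.mem_range]
        tauto
    _ = ∑ j ∈ range (n-1), if j ∈ desSet n σ then Bf (n-2) q j else 0 :=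
        Finset.sum_filter _ _
    _ = ∑ j ∈ range (n-1), Dd n σ j * Bf (n-2) q j := by
        refine Finset.sum_congr rfl fun j _ => ?_
        unfold Dd
        rw [ite_mul, one_mul, zero_mul]

lemma sum_card_mul {n : ℕ} (σ : Equiv.Perm (Fin n)) (c : Fin n → Equiv.Perm (Fin n))
    (g : Equiv.Perm (Fin n) → ℝ) :
    ∑ τ : Equiv.Perm (Fin n),
        ((Finset.univ.filter (fun i : Fin n => τ = σ * c i)).card : ℝ) * g τ
      = ∑ i : Fin n, g (σ * c i) := by
  have h : ∀ τ : Equiv.Perm (Fin n),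
      ((Finset.univ.filter (fun i : Fin n => τ = σ * c i)).card : ℝ)
        = ∑ i : Fin n, if τ = σ * c i then (1:ℝ) else 0 := by
    intro τ
    rw [Finset.card_filter]
    push_cast
    rfl
  simp_rw [h, Finset.sum_mul, ite_mul, one_mul, zero_mul]
  rw [Finset.sum_comm]
  refine Finset.sum_congr rfl fun i _ => ?_
  simp

/-- `σ ↦ f(σ) - 1/2` is a right eigenfunction of the top-or-bottom-to-random
transition matrix with eigenvalue `(n-2)/n`. -/
theorem stmt13 (n : ℕ) (hn : 2 ≤ n) (q : ℝ) (hq : q ∈ Set.Icc (0 : ℝ) 1)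
    (σ : Equiv.Perm (Fin n)) :
    ∑ τ : Equiv.Perm (Fin n), Pq n q σ τ * (fdes n q τ - 1 / 2) =
      (((n : ℝ) - 2) / n) * (fdes n q σ - 1 / 2) := by

  obtain ⟨m, rfl⟩ : ∃ m, n = m + 2 := ⟨n - 2, by omega⟩
  have hr1 : m + 2 - 1 = m + 1 := rfl
  have hr2 : m + 2 - 2 = m := rfl
  -- step 1: expand the matrix sum
  have hmain : ∑ τ : Equiv.Perm (Fin (m+2)), Pq (m+2) q σ τ * (fdes (m+2) q τ - 1 / 2)
      = q / (m+2) * (∑ i : Fin (m+2), (fdes (m+2) q (σ * Fin.cycleRange i) - 1/2))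
        + (1-q) / (m+2) * (∑ i : Fin (m+2), (fdes (m+2) q (σ * botCycle (m+2) i) - 1/2)) := by
    simp only [Pq]
    rw [← sum_card_mul σ (fun i => Fin.cycleRange i) (fun τ => fdes (m+2) q τ - 1/2),
      ← sum_card_mul σ (fun i => botCycle (m+2) i) (fun τ => fdes (m+2) q τ - 1/2)]
    rw [Finset.mul_sum, Finset.mul_sum, ← Finset.sum_add_distrib]
    refine Finset.sum_congr rfl fun τ _ => by push_cast; ring
  -- step 2: the two inner sums
  have htop : ∑ i : Fin (m+2), fdes (m+2) q (σ * Fin.cycleRange i)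
      = ∑ j ∈ range (m+1),
          ((↑(m-j)) * Dd (m+2) σ (j+1) + (↑j) * Dd (m+2) σ j + 1) * Bf m q j := by
    have : ∀ i : Fin (m+2), fdes (m+2) q (σ * Fin.cycleRange i)
        = ∑ j ∈ range (m+1), Dd (m+2) (σ * Fin.cycleRange i) j * Bf m q j := by
      intro i
      rw [fdes_eq, hr1, hr2]
    rw [Finset.sum_congr rfl fun i _ => this i, Finset.sum_comm]
    refine Finset.sum_congr rfl fun j hj => ?_
    rw [Finset.mem_range] at hj
    rw [← Finset.sum_mul, top_sum σ hj]
  have hbot : ∑ i : Fin (m+2), fdes (m+2) q (σ * botCycle (m+2) i)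
      = ∑ j ∈ range (m+1),
          ((↑(m-j)) * Dd (m+2) σ j + (↑j) * Dd (m+2) σ (j-1) + 1) * Bf m q j := by
    have : ∀ i : Fin (m+2), fdes (m+2) q (σ * botCycle (m+2) i)
        = ∑ j ∈ range (m+1), Dd (m+2) (σ * botCycle (m+2) i) j * Bf m q j := by
      intro i
      rw [fdes_eq, hr1, hr2]
    rw [Finset.sum_congr rfl fun i _ => this i, Finset.sum_comm]
    refine Finset.sum_congr rfl fun j hj => ?_
    rw [Finset.mem_range] at hj
    rw [← Finset.sum_mul, bot_sum σ hj]
  -- step 3: the key combination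
  have hkey : q * (∑ i : Fin (m+2), fdes (m+2) q (σ * Fin.cycleRange i))
      + (1-q) * (∑ i : Fin (m+2), fdes (m+2) q (σ * botCycle (m+2) i))
      = (↑m) * fdes (m+2) q σ + 1 := by
    rw [htop, hbot, Finset.mul_sum, Finset.mul_sum, ← Finset.sum_add_distrib]
    have hsplit : ∀ j ∈ range (m+1),
        q * (((↑(m-j)) * Dd (m+2) σ (j+1) + (↑j) * Dd (m+2) σ j + 1) * Bf m q j)
          + (1-q) * (((↑(m-j)) * Dd (m+2) σ j + (↑j) * Dd (m+2) σ (j-1) + 1) * Bf m q j)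
        = (q * ((↑(m-j)) * Dd (m+2) σ (j+1) + (↑j) * Dd (m+2) σ j)
            + (1-q) * ((↑(m-j)) * Dd (m+2) σ j + (↑j) * Dd (m+2) σ (j-1))) * Bf m q j
          + Bf m q j := fun j _ => by ring
    rw [Finset.sum_congr rfl hsplit, Finset.sum_add_distrib, sumBf,
      middle_claim m q (fun j => Dd (m+2) σ j), fdes_eq, hr1, hr2]
  -- step 4: conclude
  rw [hmain]
  have e1 : ∑ i : Fin (m+2), (fdes (m+2) q (σ * Fin.cycleRange i) - 1/2)
      = (∑ i : Fin (m+2), fdes (m+2) q (σ * Fin.cycleRange i)) - ((m:ℝ)+2) * (1/2) := by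
    rw [Finset.sum_sub_distrib, Finset.sum_const, Finset.card_univ, Fintype.card_fin,
      nsmul_eq_mul]
    push_cast
    ring
  have e2 : ∑ i : Fin (m+2), (fdes (m+2) q (σ * botCycle (m+2) i) - 1/2)
      = (∑ i : Fin (m+2), fdes (m+2) q (σ * botCycle (m+2) i)) - ((m:ℝ)+2) * (1/2) := by
    rw [Finset.sum_sub_distrib, Finset.sum_const, Finset.card_univ, Fintype.card_fin,
      nsmul_eq_mul]
    push_cast
    ring
  rw [e1, e2]
  have hM : ((m:ℝ)+2) ≠ 0 := by positivity
  have expand : q / ((m:ℝ)+2) * ((∑ i : Fin (m+2), fdes (m+2) q (σ * Fin.cycleRange i)) - ((m:ℝ)+2) * (1/2))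
      + (1-q) / ((m:ℝ)+2) * ((∑ i : Fin (m+2), fdes (m+2) q (σ * botCycle (m+2) i)) - ((m:ℝ)+2) * (1/2))
      = (1 / ((m:ℝ)+2)) * (q * (∑ i : Fin (m+2), fdes (m+2) q (σ * Fin.cycleRange i))
          + (1-q) * (∑ i : Fin (m+2), fdes (m+2) q (σ * botCycle (m+2) i))) - 1/2 := by
    field_simp
    ring
  rw [expand, hkey]
  have hc2 : ((m+2:ℕ):ℝ) = (m:ℝ)+2 := by push_cast; ring
  rw [hc2]
  field_simp
  ring
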